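/- arXiv:1404.0308 — 3 statements merged into one kernel-verified Lean document; each statement's English description precedes it below -/
import Mathlib

section
/- Let L be a field and let G be a finite group acting by field automorphisms on the rational function field L(x_1,…,x_n) in n variables over L. Suppose that (i) σ(L) ⊆ L for every σ ∈ G, (ii) the restriction of the G-action to L is faithful, and (iii) for every σ ∈ G there exist A(σ) ∈ GL_n(L) and a column vector B(σ) ∈ L^n such that (σ(x_1),…,σ(x_n))ᵀ = A(σ)·(x_1,…,x_n)ᵀ + B(σ). Then there exist z_1,…,z_n ∈ L(x_1,…,x_n) such that L(x_1,…,x_n) = L(z_1,…,z_n) and σ(z_i) = z_i for every σ ∈ G and every 1 ≤ i ≤ n. -/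
set_option maxHeartbeats 1000000
set_option synthInstance.maxHeartbeats 800000


noncomputable section

/-- The rational function field over `k` in variables indexed by `σ`:
the fraction field of the polynomial ring `k[x_i : i ∈ σ]`. -/
abbrev RatFn (k : Type) [Field k] (σ : Type) : Type := FractionRing (MvPolynomial σ k)

/-- The group of `k`-automorphisms of the rational function field `RatFn k σ`. -/
abbrev RatFnAut (k : Type) [Field k] (σ : Type) : Type := (RatFn k σ) ≃ₐ[k] (RatFn k σ)

/-- The variable `x_i`, viewed as an element of the rational function field. -/
def Xv (k : Type) [Field k] {σ : Type} (i : σ) : RatFn k σ :=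
  algebraMap (MvPolynomial σ k) (RatFn k σ) (MvPolynomial.X i)

/-- `σ` is the Noether action of `G` on `k(x_g : g ∈ G)`, i.e. the action by
`k`-automorphisms determined by `h • x_g = x_{h*g}`. -/
def IsNoetherAction (k : Type) [Field k] (G : Type) [Group G]
    (σ : G →* RatFnAut k G) : Prop :=
  ∀ h g : G, σ h (Xv k g) = Xv k (h * g)

/-- A field extension `K/k` is `k`-rational if it is `k`-isomorphic to a rational
function field in finitely many variables over `k`. -/
def IsRationalExt (k : Type) [Field k] (K : Type) [Field K] [Algebra k K] : Prop :=
  ∃ n : ℕ, Nonempty (K ≃ₐ[k] RatFn k (Fin n))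

/-- A field extension `K/k` is stably `k`-rational if a rational function field
in finitely many variables over `K` is `k`-rational. -/
def IsStablyRationalExt (k : Type) [Field k] (K : Type) [Field K] [Algebra k K] : Prop :=
  ∃ m : ℕ, IsRationalExt k (FractionRing (MvPolynomial (Fin m) K))

/-- Two field extensions `K/k` and `L/k` are stably `k`-isomorphic if rational function
fields in finitely many variables over `K` resp. `L` are `k`-isomorphic. -/
def IsStablyIsomorphicExt (k : Type) [Field k] (K L : Type) [Field K] [Field L]
    [Algebra k K] [Algebra k L] : Prop :=
  ∃ m n : ℕ,
    Nonempty ((FractionRing (MvPolynomial (Fin m) K)) ≃ₐ[k] (FractionRing (MvPolynomial (Fin n) L)))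

/-- The Noether field `k(G) = k(x_g : g ∈ G)^G`, realized as the fixed field of the
Noether action `σ` of `G` on the rational function field `k(x_g : g ∈ G)`. -/
def NoetherField (k : Type) [Field k] (G : Type) [Group G] (σ : G →* RatFnAut k G) :
    IntermediateField k (RatFn k G) :=
  IntermediateField.fixedField σ.range

/-- The Noether field `k(G)` is `k`-rational. -/
def NoetherRational (k : Type) [Field k] (G : Type) [Group G] (σ : G →* RatFnAut k G) : Prop :=
  IsRationalExt k (NoetherField k G σ)

/-- The Noether field `k(G)` is stably `k`-rational. -/
def NoetherStablyRational (k : Type) [Field k] (G : Type) [Group G]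
    (σ : G →* RatFnAut k G) : Prop :=
  IsStablyRationalExt k (NoetherField k G σ)

/-- The Noether fields `k(G₁)` and `k(G₂)` are stably `k`-isomorphic. -/
def NoetherStablyIsomorphic (k : Type) [Field k] (G₁ G₂ : Type) [Group G₁] [Group G₂]
    (σ₁ : G₁ →* RatFnAut k G₁) (σ₂ : G₂ →* RatFnAut k G₂) : Prop :=
  IsStablyIsomorphicExt k (NoetherField k G₁ σ₁) (NoetherField k G₂ σ₂)

/-- The variables generate the rational function field. -/
lemma adjoin_Xv_eq_top (L : Type) [Field L] (n : ℕ) :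
    IntermediateField.adjoin L (Set.range (Xv L (σ := Fin n))) = ⊤ := by
  rw [eq_top_iff]
  rintro x -
  obtain ⟨p, q, hq, rfl⟩ := IsFractionRing.div_surjective (A := MvPolynomial (Fin n) L) x
  have hmem : ∀ r : MvPolynomial (Fin n) L,
      algebraMap (MvPolynomial (Fin n) L) (RatFn L (Fin n)) r ∈
        IntermediateField.adjoin L (Set.range (Xv L (σ := Fin n))) := by
    intro r
    induction r using MvPolynomial.induction_on with
    | C a =>
        rw [← MvPolynomial.algebraMap_eq, ← IsScalarTower.algebraMap_apply]
        exact IntermediateField.algebraMap_mem _ a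
    | add p q hp hq => rw [map_add]; exact add_mem hp hq
    | mul_X p i hp =>
        rw [map_mul]
        exact mul_mem hp (IntermediateField.subset_adjoin _ _ ⟨i, rfl⟩)
  exact div_mem (hmem p) (hmem q)

/-- **Hajja–Kang.** Let `G` be a finite group acting by field automorphisms on the rational
function field `L(x₁,…,xₙ)` such that each `σ ∈ G` maps `L` into `L`, the restricted action
on `L` is faithful, and each `σ ∈ G` acts on the variables affinely:
`σ(xᵢ) = Σⱼ A(σ)ᵢⱼ xⱼ + B(σ)ᵢ` with `A(σ) ∈ GLₙ(L)`, `B(σ) ∈ Lⁿ`. Then there are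
`z₁,…,zₙ ∈ L(x₁,…,xₙ)`, fixed by every `σ ∈ G`, with `L(x₁,…,xₙ) = L(z₁,…,zₙ)`. -/
theorem statement14 (L : Type) [Field L] (n : ℕ) (G : Type) [Group G] [Finite G]
    (σ : G →* (RatFn L (Fin n) ≃+* RatFn L (Fin n)))
    (hL : ∀ (g : G) (a : L), ∃ b : L,
      σ g (algebraMap L (RatFn L (Fin n)) a) = algebraMap L (RatFn L (Fin n)) b)
    (hfaithful : ∀ g : G,
      (∀ a : L, σ g (algebraMap L (RatFn L (Fin n)) a) = algebraMap L (RatFn L (Fin n)) a) →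
      g = 1)
    (haffine : ∀ g : G, ∃ (A : GL (Fin n) L) (B : Fin n → L), ∀ i : Fin n,
      σ g (Xv L i) =
        (∑ j : Fin n, algebraMap L (RatFn L (Fin n)) ((A : Matrix (Fin n) (Fin n) L) i j)
            * Xv L j)
          + algebraMap L (RatFn L (Fin n)) (B i)) :
    ∃ z : Fin n → RatFn L (Fin n),
      IntermediateField.adjoin L (Set.range z) = ⊤ ∧
      ∀ (g : G) (i : Fin n), σ g (z i) = z i := by
  classical
  cases nonempty_fintype G
  have hinj : Function.Injective (algebraMap L (RatFn L (Fin n))) :=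
    (algebraMap L (RatFn L (Fin n))).injective
  choose ρ hρ using hL
  have hmul : ∀ (g h : G) (x : RatFn L (Fin n)), σ (g * h) x = σ g (σ h x) := by
    intro g h x; rw [map_mul]; rfl
  have hone : ∀ x : RatFn L (Fin n), σ 1 x = x := by
    intro x; rw [map_one]; rfl
  have hρ_one : ∀ g, ρ g 1 = 1 := fun g => hinj (by rw [← hρ g 1]; simp)
  have hρ_mul : ∀ g a b, ρ g (a * b) = ρ g a * ρ g b := fun g a b => hinj (by
    rw [← hρ g (a * b), map_mul, map_mul, map_mul, hρ g a, hρ g b])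
  set ρ' : G → (L →* L) := fun g =>
    { toFun := ρ g, map_one' := hρ_one g, map_mul' := hρ_mul g } with hρ'
  have hρ'inj : Function.Injective ρ' := by
    intro g h hgh
    have hfix : ∀ a : L, σ (h⁻¹ * g) (algebraMap L (RatFn L (Fin n)) a)
        = algebraMap L (RatFn L (Fin n)) a := by
      intro a
      have hgh' : ρ g a = ρ h a := DFunLike.congr_fun hgh a
      rw [hmul, hρ g a, hgh', ← hρ h a, ← hmul, inv_mul_cancel, hone]
    exact (inv_mul_eq_one.mp (hfaithful _ hfix)).symm
  have hli : LinearIndependent L (fun g : G => ((ρ' g : L →* L) : L → L)) :=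
    (linearIndependent_monoidHom L L).comp ρ' hρ'inj
  -- the affinely spanned space
  set sF : Finset (RatFn L (Fin n)) :=
    insert 1 (Finset.image (Xv L) Finset.univ) with hsF
  set V : Submodule L (RatFn L (Fin n)) :=
    Submodule.span L (sF : Set (RatFn L (Fin n))) with hV
  set F : Set (RatFn L (Fin n)) := {w | w ∈ V ∧ ∀ g : G, σ g w = w} with hF
  have hXvV : ∀ j : Fin n, Xv L j ∈ V := fun j =>
    Submodule.subset_span (by simp [hsF])
  have h1V : (1 : RatFn L (Fin n)) ∈ V := Submodule.subset_span (by simp [hsF])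
  have hσXV : ∀ (g : G) (j : Fin n), σ g (Xv L j) ∈ V := by
    intro g j
    obtain ⟨A, B, hAB⟩ := haffine g
    rw [hAB j]
    refine add_mem (Submodule.sum_mem _ fun k _ => ?_) ?_
    · rw [← Algebra.smul_def]
      exact Submodule.smul_mem _ _ (hXvV k)
    · rw [show (algebraMap L (RatFn L (Fin n)) (B j))
          = B j • (1 : RatFn L (Fin n)) by rw [Algebra.smul_def, mul_one]]
      exact Submodule.smul_mem _ _ h1V
  -- key step: each variable lies in the span of the fixed vectors of V
  have hXW : ∀ j : Fin n, Xv L j ∈ Submodule.span L F := by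
    intro j
    by_contra hX
    set W := Submodule.span L F with hW
    have hq : W.mkQ (Xv L j) ≠ 0 := by
      simpa [Submodule.mkQ_apply, Submodule.Quotient.mk_eq_zero] using hX
    obtain ⟨φ, hφ⟩ : ∃ φ : Module.Dual L (RatFn L (Fin n) ⧸ W),
        φ (W.mkQ (Xv L j)) ≠ 0 := by
      by_contra h
      push_neg at h
      exact hq ((Module.forall_dual_apply_eq_zero_iff L _).mp h)
    set f : RatFn L (Fin n) →ₗ[L] L := φ.comp W.mkQ with hf
    have hfW : ∀ w ∈ W, f w = 0 := by
      intro w hw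
      have : W.mkQ w = 0 := by
        rw [Submodule.mkQ_apply, Submodule.Quotient.mk_eq_zero]; exact hw
      simp [hf, this]
    have hTF : ∀ lam : L,
        (∑ g : G, σ g (algebraMap L (RatFn L (Fin n)) lam * Xv L j)) ∈ F := by
      intro lam
      constructor
      · have heach : ∀ g : G, σ g (algebraMap L (RatFn L (Fin n)) lam * Xv L j)
            = ρ g lam • σ g (Xv L j) := by
          intro g; rw [map_mul, hρ, Algebra.smul_def]
        rw [Finset.sum_congr rfl (fun g _ => heach g)]
        exact Submodule.sum_mem _ fun g _ => Submodule.smul_mem _ _ (hσXV g j)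
      · intro h
        rw [map_sum]
        exact Fintype.sum_equiv (Equiv.mulLeft h)
          (fun g => σ h (σ g (algebraMap L (RatFn L (Fin n)) lam * Xv L j)))
          (fun g => σ g (algebraMap L (RatFn L (Fin n)) lam * Xv L j))
          (fun g => by simp only [Equiv.coe_mulLeft]; exact (hmul h g _).symm)
    have hzero : ∀ lam : L, ∑ g : G, ρ g lam * f (σ g (Xv L j)) = 0 := by
      intro lam
      have h0 : f (∑ g : G, σ g (algebraMap L (RatFn L (Fin n)) lam * Xv L j)) = 0 :=
        hfW _ (Submodule.subset_span (hTF lam))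
      rw [map_sum] at h0
      rw [← h0]
      refine Finset.sum_congr rfl fun g _ => ?_
      have heach : σ g (algebraMap L (RatFn L (Fin n)) lam * Xv L j)
          = ρ g lam • σ g (Xv L j) := by
        rw [map_mul, hρ, Algebra.smul_def]
      rw [heach, map_smul, smul_eq_mul]
    have hc : ∀ g : G, f (σ g (Xv L j)) = 0 := by
      refine Fintype.linearIndependent_iff.mp hli (fun g => f (σ g (Xv L j))) ?_
      funext lam
      have := hzero lam
      simpa [hρ', Finset.sum_apply, Pi.smul_apply, smul_eq_mul, mul_comm] using this
    have h1 : f (Xv L j) = 0 := by simpa [hone] using hc 1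
    exact hφ (by simpa [hf] using h1)
  -- extract a small generating set of fixed vectors
  have h1F : (1 : RatFn L (Fin n)) ∈ F := ⟨h1V, fun g => by rw [map_one]⟩
  obtain ⟨b, hbF, h1b, hFb, hbli⟩ :=
    exists_linearIndepOn_id_extension
      ((linearIndepOn_singleton_iff (R := L) (v := id)).mpr (one_ne_zero : (1 : RatFn L (Fin n)) ≠ 0))
      (Set.singleton_subset_iff.mpr h1F)
  have hbV : Set.range ((↑) : b → RatFn L (Fin n)) ≤ V := by
    rw [Subtype.range_coe]
    exact fun x hx => (hbF hx).1
  have hcard : Cardinal.mk b ≤ Fintype.card (sF : Set (RatFn L (Fin n))) :=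
    linearIndependent_le_span' _ hbli _ hbV
  have hfinb : Finite b :=
    Cardinal.lt_aleph0_iff_finite.mp (hcard.trans_lt (Cardinal.nat_lt_aleph0 _))
  have hb_fin : b.Finite := Set.finite_coe_iff.mp hfinb
  have hsF_le : sF.card ≤ n + 1 := by
    calc sF.card ≤ (Finset.image (Xv L) Finset.univ).card + 1 := Finset.card_insert_le _ _
    _ ≤ (Finset.univ : Finset (Fin n)).card + 1 :=
        Nat.add_le_add_right (Finset.card_image_le) 1
    _ = n + 1 := by simp
  have hbcard : hb_fin.toFinset.card ≤ n + 1 := by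
    haveI := hb_fin.fintype
    have h1 : (Cardinal.mk b : Cardinal) = hb_fin.toFinset.card := by
      simp [Cardinal.mk_fintype, Set.Finite.card_toFinset]
    have h2 : (Fintype.card (sF : Set (RatFn L (Fin n))) : ℕ) = sF.card :=
      Fintype.card_coe sF
    have := hcard
    rw [h1, h2] at this
    exact_mod_cast (Nat.cast_le.mp this).trans hsF_le
  set bFin : Finset (RatFn L (Fin n)) := hb_fin.toFinset with hbFin
  have h1bFin : (1 : RatFn L (Fin n)) ∈ bFin := by
    rw [hbFin, Set.Finite.mem_toFinset]
    exact h1b rfl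
  set cF : Finset (RatFn L (Fin n)) := bFin.erase 1 with hcF
  have hcF_card : cF.card ≤ n := by
    rw [hcF, Finset.card_erase_of_mem h1bFin]
    omega
  set lst := cF.toList with hlst
  have hlen : lst.length ≤ n := by
    rw [hlst, Finset.length_toList]; exact hcF_card
  set z : Fin n → RatFn L (Fin n) :=
    (fun j => if h : (j : ℕ) < lst.length then lst[(j : ℕ)] else 1) with hz
  have hzmem : ∀ j : Fin n, z j = 1 ∨ z j ∈ b := by
    intro j
    by_cases h : (j : ℕ) < lst.length
    · right
      have hzj : z j = lst[(j : ℕ)] := by simp only [hz]; rw [dif_pos h]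
      rw [hzj]
      have : lst[(j : ℕ)] ∈ cF := by
        rw [← Finset.mem_toList, ← hlst]; exact List.getElem_mem h
      have hb' : lst[(j : ℕ)] ∈ bFin := Finset.mem_of_mem_erase this
      rwa [hbFin, Set.Finite.mem_toFinset] at hb'
    · left; simp only [hz]; rw [dif_neg h]
  have hbfixed : ∀ x ∈ b, ∀ g : G, σ g x = x := fun x hx => (hbF hx).2
  refine ⟨z, ?_, ?_⟩
  · -- adjoin L (range z) = ⊤
    set E := IntermediateField.adjoin L (Set.range z) with hE
    have hbE : b ⊆ (E : Set (RatFn L (Fin n))) := by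
      intro x hx
      by_cases hx1 : x = 1
      · rw [hx1]; exact one_mem E
      · have hxc : x ∈ cF := by
          rw [hcF, Finset.mem_erase]
          exact ⟨hx1, by rw [hbFin, Set.Finite.mem_toFinset]; exact hx⟩
        have hxl : x ∈ lst := by rw [hlst, Finset.mem_toList]; exact hxc
        obtain ⟨k, hk, hkx⟩ := List.mem_iff_getElem.mp hxl
        have hkn : k < n := lt_of_lt_of_le hk hlen
        have : z ⟨k, hkn⟩ = x := by simp only [hz]; rw [dif_pos hk]; exact hkx
        exact IntermediateField.subset_adjoin _ _ ⟨⟨k, hkn⟩, this⟩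
    have hspan : Submodule.span L F ≤ Subalgebra.toSubmodule E.toSubalgebra := by
      refine le_trans (Submodule.span_le.mpr hFb) ?_
      exact Submodule.span_le.mpr hbE
    have hXE : ∀ j : Fin n, Xv L j ∈ E := fun j => hspan (hXW j)
    rw [eq_top_iff, ← adjoin_Xv_eq_top L n]
    exact IntermediateField.adjoin_le_iff.mpr (by rintro x ⟨j, rfl⟩; exact hXE j)
  · -- fixedness
    intro g j
    rcases hzmem j with h | h
    · rw [h, map_one]
    · exact hbfixed _ h g
end
end

section
/- Let L be a field, let L(x) be the rational function field in one variable x over L, and let G be a finite group acting on L(x) by field automorphisms. Suppose that for every σ ∈ G one has σ(L) ⊆ L and σ(x) = a_σ x + b_σ with a_σ, b_σ ∈ L and a_σ ≠ 0. Then L(x)^G = L^G(f) for some polynomial f ∈ L[x]; in fact, if m = min{deg g : g ∈ L[x]^G \ L}, then any polynomial f ∈ L[x]^G with deg f = m satisfies L(x)^G = L^G(f). -/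
noncomputable section

/-- The fixed subfield of a field `F` under the action of a group `G` by field
automorphisms given by `σ`. -/
def fixedSubfield (G : Type) [Group G] (F : Type) [Field F] (σ : G →* (F ≃+* F)) :
    Subfield F where
  carrier := {x | ∀ g : G, σ g x = x}
  zero_mem' := fun g => map_zero _
  one_mem' := fun g => map_one _
  add_mem' := by intro a b ha hb g; rw [map_add, ha g, hb g]
  mul_mem' := by intro a b ha hb g; rw [map_mul, ha g, hb g]
  neg_mem' := by intro a ha g; rw [map_neg, ha g]
  inv_mem' := by intro a ha g; rw [map_inv₀, ha g]

/-- A polynomial `p ∈ L[x]` is `G`-invariant (for an action of `G` on `L(x)` mapping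
polynomials to polynomials) if its image in `L(x)` is fixed by every `g ∈ G`. -/
def IsInvariantPoly (G : Type) [Group G] (L : Type) [Field L]
    (σ : G →* (RatFunc L ≃+* RatFunc L)) (p : Polynomial L) : Prop :=
  ∀ g : G, σ g (algebraMap (Polynomial L) (RatFunc L) p) =
    algebraMap (Polynomial L) (RatFunc L) p

/-- `L^G(f)`: the subfield of `L(x)` generated by the fixed field of the induced action
on `L` together with (the image of) the polynomial `f`. -/
def genSubfield (G : Type) [Group G] (L : Type) [Field L]
    (σ : G →* (RatFunc L ≃+* RatFunc L)) (f : Polynomial L) : Subfield (RatFunc L) :=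
  Subfield.closure ((fun a : L => (RatFunc.C a : RatFunc L)) ''
      {a : L | ∀ g : G, σ g (RatFunc.C a) = RatFunc.C a} ∪
    {algebraMap (Polynomial L) (RatFunc L) f})

open Polynomial

namespace AHK

variable {L : Type} [Field L] {G : Type} [Group G]

variable (σ : G →* (RatFunc L ≃+* RatFunc L))

lemma sigma_mul (g h : G) (x : RatFunc L) : σ (g * h) x = σ g (σ h x) := by
  rw [map_mul]; rfl

lemma iota_inj : Function.Injective (algebraMap (Polynomial L) (RatFunc L)) :=
  RatFunc.algebraMap_injective L

/-- Uniqueness of division with remainder. -/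
lemma div_unique {f s r s' r' : Polynomial L} (hf : f ≠ 0)
    (h : f * s + r = f * s' + r') (hr : r.degree < f.degree) (hr' : r'.degree < f.degree) :
    s = s' ∧ r = r' := by
  have key : f * (s - s') = r' - r := by linear_combination h
  have hs : s = s' := by
    by_contra hne
    have h1 : f.degree ≤ (f * (s - s')).degree := by
      rw [degree_mul]
      have h0 : (0 : WithBot ℕ) ≤ (s - s').degree := by
        rw [Polynomial.degree_eq_natDegree (sub_ne_zero.2 hne)]
        exact_mod_cast Nat.zero_le _
      exact le_add_of_nonneg_right h0
    have h2 : (r' - r).degree < f.degree :=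
      lt_of_le_of_lt (Polynomial.degree_sub_le r' r) (max_lt hr' hr)
    rw [key] at h1
    exact absurd (lt_of_le_of_lt h1 h2) (lt_irrefl _)
  refine ⟨hs, ?_⟩
  have h3 := key
  rw [hs, sub_self, mul_zero] at h3
  exact (sub_eq_zero.mp h3.symm).symm

/-- Division with remainder by a nonzero polynomial over a field. -/
lemma exists_div (f h : Polynomial L) (hf : f ≠ 0) :
    ∃ s r : Polynomial L, h = f * s + r ∧ r.degree < f.degree := by
  set f' := f * C f.leadingCoeff⁻¹ with hf'
  have hmon : f'.Monic := monic_mul_leadingCoeff_inv hf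
  refine ⟨C f.leadingCoeff⁻¹ * (h /ₘ f'), h %ₘ f', ?_, ?_⟩
  · calc h = h %ₘ f' + f' * (h /ₘ f') := (modByMonic_add_div h f').symm
    _ = f * (C f.leadingCoeff⁻¹ * (h /ₘ f')) + h %ₘ f' := by rw [hf']; ring
  · calc (h %ₘ f').degree < f'.degree := degree_modByMonic_lt h hmon
    _ = f.degree := degree_mul_leadingCoeff_inv f hf

section Defs

variable (hL : ∀ (g : G) (a : L), ∃ b : L, σ g (RatFunc.C a) = RatFunc.C b)
  (haff : ∀ g : G, ∃ a b : L, a ≠ 0 ∧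
      σ g (RatFunc.X) = RatFunc.C a * RatFunc.X + RatFunc.C b)

/-- The restriction of `σ g` to `L`. -/
def tau (g : G) : L →+* L where
  toFun a := Classical.choose (hL g a)
  map_one' := RatFunc.C.injective <| by
    rw [← Classical.choose_spec (hL g 1), map_one, map_one]
  map_zero' := RatFunc.C.injective <| by
    rw [← Classical.choose_spec (hL g 0), map_zero, map_zero]
  map_mul' a b := RatFunc.C.injective <| by
    rw [map_mul RatFunc.C (Classical.choose (hL g a)) (Classical.choose (hL g b)), ← Classical.choose_spec (hL g a), ← Classical.choose_spec (hL g b),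
      ← Classical.choose_spec (hL g (a * b)), map_mul, map_mul]
  map_add' a b := RatFunc.C.injective <| by
    rw [map_add RatFunc.C (Classical.choose (hL g a)) (Classical.choose (hL g b)), ← Classical.choose_spec (hL g a), ← Classical.choose_spec (hL g b),
      ← Classical.choose_spec (hL g (a + b)), map_add, map_add]

lemma sigma_C (g : G) (a : L) : σ g (RatFunc.C a) = RatFunc.C (tau σ hL g a) :=
  Classical.choose_spec (hL g a)

def Aco (g : G) : L := Classical.choose (haff g)

def Bco (g : G) : L := Classical.choose (Classical.choose_spec (haff g))

lemma Aco_ne (g : G) : Aco σ haff g ≠ 0 :=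
  (Classical.choose_spec (Classical.choose_spec (haff g))).1

lemma sigma_X (g : G) : σ g RatFunc.X =
    RatFunc.C (Aco σ haff g) * RatFunc.X + RatFunc.C (Bco σ haff g) :=
  (Classical.choose_spec (Classical.choose_spec (haff g))).2

/-- The induced action of `g` on polynomials. -/
def Pg (g : G) : Polynomial L →+* Polynomial L :=
  eval₂RingHom (C.comp (tau σ hL g)) (C (Aco σ haff g) * X + C (Bco σ haff g))

lemma iota_Pg (g : G) (p : Polynomial L) :
    σ g (algebraMap (Polynomial L) (RatFunc L) p) =
      algebraMap (Polynomial L) (RatFunc L) (Pg σ hL haff g p) := by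
  have h : ((σ g).toRingHom.comp (algebraMap (Polynomial L) (RatFunc L))) =
      (algebraMap (Polynomial L) (RatFunc L)).comp (Pg σ hL haff g) := by
    apply Polynomial.ringHom_ext
    · intro a
      simp only [RingHom.comp_apply, RatFunc.algebraMap_C, Pg, coe_eval₂RingHom, eval₂_C,
        RingHom.coe_comp, Function.comp_apply]
      exact sigma_C σ hL g a
    · simp only [RingHom.comp_apply, RatFunc.algebraMap_X, Pg, coe_eval₂RingHom, eval₂_X]
      rw [map_add, map_mul, RatFunc.algebraMap_C, RatFunc.algebraMap_C, RatFunc.algebraMap_X]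
      exact sigma_X σ haff g
  exact RingHom.congr_fun h p

lemma Pg_eq (g : G) (p : Polynomial L) :
    Pg σ hL haff g p = (p.map (tau σ hL g)).comp (C (Aco σ haff g) * X + C (Bco σ haff g)) := by
  rw [Polynomial.comp, eval₂_map]
  rfl

lemma Pg_natDegree (g : G) (p : Polynomial L) :
    (Pg σ hL haff g p).natDegree = p.natDegree := by
  rw [Pg_eq, natDegree_comp, natDegree_linear (Aco_ne σ haff g), mul_one,
    natDegree_map_eq_of_injective (tau σ hL g).injective]

lemma Pg_ne_zero (g : G) {p : Polynomial L} (hp : p ≠ 0) : Pg σ hL haff g p ≠ 0 := by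
  intro h
  apply hp
  have h1 := iota_Pg σ hL haff g p
  rw [h, map_zero] at h1
  have h2 : algebraMap (Polynomial L) (RatFunc L) p = 0 := by
    have h3 := congrArg (σ g).symm h1
    simpa using h3
  simpa using iota_inj (by simpa using h2)

/-- Semi-invariant polynomials with a common multiplier system `c` are all multiples of
a minimal one by invariant polynomials. -/
lemma semiInv_factor (c : G → L) (hc : ∀ g, c g ≠ 0) (h0 : Polynomial L) (h0ne : h0 ≠ 0)
    (h0M : ∀ g, Pg σ hL haff g h0 = C (c g) * h0)
    (h0min : ∀ h : Polynomial L, h ≠ 0 → (∀ g, Pg σ hL haff g h = C (c g) * h) →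
      h0.natDegree ≤ h.natDegree)
    (h : Polynomial L) (hM : ∀ g, Pg σ hL haff g h = C (c g) * h) :
    ∃ s, (∀ g : G, Pg σ hL haff g s = s) ∧ h = h0 * s := by
  obtain ⟨s, r, hdiv, hr⟩ := exists_div h0 h h0ne
  have key : ∀ g, Pg σ hL haff g s = s ∧ Pg σ hL haff g r = C (c g) * r := by
    intro g
    have e1 := congrArg (Pg σ hL haff g) hdiv
    rw [map_add, map_mul, hM g, h0M g] at e1
    have e2 : h0 * (C (c g) * s) + C (c g) * r =
        h0 * (C (c g) * Pg σ hL haff g s) + Pg σ hL haff g r := by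
      calc h0 * (C (c g) * s) + C (c g) * r = C (c g) * h := by rw [hdiv]; ring
      _ = h0 * (C (c g) * Pg σ hL haff g s) + Pg σ hL haff g r := by rw [e1]; ring
    have hrg : (Pg σ hL haff g r).degree < h0.degree := by
      by_cases hr0 : r = 0
      · rw [hr0, map_zero, degree_zero]
        exact bot_lt_iff_ne_bot.mpr fun hh => h0ne (degree_eq_bot.mp hh)
      · rw [degree_eq_natDegree (Pg_ne_zero σ hL haff g hr0), Pg_natDegree,
          ← degree_eq_natDegree hr0]
        exact hr
    have hcr : (C (c g) * r).degree < h0.degree := by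
      rw [degree_C_mul (hc g)]; exact hr
    obtain ⟨hs', hr'⟩ := div_unique h0ne e2 hcr hrg
    exact ⟨(mul_left_cancel₀ (C_ne_zero.mpr (hc g)) hs').symm, hr'.symm⟩
  by_cases hr0 : r = 0
  · exact ⟨s, fun g => (key g).1, by rw [hdiv, hr0, add_zero]⟩
  · exfalso
    have h1 := h0min r hr0 (fun g => (key g).2)
    have h2 : r.natDegree < h0.natDegree := natDegree_lt_natDegree hr0 hr
    omega

end Defs

end AHK

open AHK

/-- **Ahmad–Hajja–Kang.** Let a finite group `G` act on `L(x)` by field automorphisms with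
`σ(L) ⊆ L` and `σ(x) = a_σ x + b_σ`, `a_σ ≠ 0`. Then `L(x)^G = L^G(f)` for some polynomial
`f ∈ L[x]`; in fact any `G`-invariant polynomial `f` whose degree is minimal among the
degrees of nonconstant `G`-invariant polynomials satisfies `L(x)^G = L^G(f)`. -/
theorem statement15 (L : Type) [Field L] (G : Type) [Group G] [Finite G]
    (σ : G →* (RatFunc L ≃+* RatFunc L))
    (hL : ∀ (g : G) (a : L), ∃ b : L, σ g (RatFunc.C a) = RatFunc.C b)
    (haff : ∀ g : G, ∃ a b : L, a ≠ 0 ∧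
      σ g (RatFunc.X) = RatFunc.C a * RatFunc.X + RatFunc.C b) :
    (∃ f : Polynomial L, IsInvariantPoly G L σ f ∧
      fixedSubfield G (RatFunc L) σ = genSubfield G L σ f) ∧
    (∀ f : Polynomial L, IsInvariantPoly G L σ f →
      f.natDegree = sInf {d : ℕ | ∃ p : Polynomial L,
        IsInvariantPoly G L σ p ∧ 0 < p.natDegree ∧ p.natDegree = d} →
      fixedSubfield G (RatFunc L) σ = genSubfield G L σ f) := by
  classical
  have _inst : Fintype G := Fintype.ofFinite G
  set ι := algebraMap (Polynomial L) (RatFunc L) with hιdef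
  -- The set S of degrees of nonconstant invariant polynomials is nonempty.
  have hSne : {d : ℕ | ∃ p : Polynomial L,
      IsInvariantPoly G L σ p ∧ 0 < p.natDegree ∧ p.natDegree = d}.Nonempty := by
    set F : Polynomial L := ∏ g : G, (C (Aco σ haff g) * X + C (Bco σ haff g)) with hF
    have hfac : ∀ g : G, ι (C (Aco σ haff g) * X + C (Bco σ haff g)) = σ g RatFunc.X := by
      intro g
      rw [map_add, map_mul, RatFunc.algebraMap_C, RatFunc.algebraMap_C, RatFunc.algebraMap_X,
        ← sigma_X σ haff g]
    have hFι : ι F = ∏ g : G, σ g RatFunc.X := by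
      rw [hF, map_prod]
      exact Finset.prod_congr rfl fun g _ => hfac g
    have hFinv : IsInvariantPoly G L σ F := by
      intro h
      rw [hFι, map_prod]
      calc (∏ g : G, σ h (σ g RatFunc.X)) = ∏ g : G, σ (h * g) RatFunc.X :=
            Finset.prod_congr rfl fun g _ => (sigma_mul σ h g RatFunc.X).symm
        _ = ∏ g : G, σ g RatFunc.X := Equiv.prod_comp (Equiv.mulLeft h) fun g => σ g RatFunc.X
    have hfacne : ∀ g : G, (C (Aco σ haff g) * X + C (Bco σ haff g) : Polynomial L) ≠ 0 := by
      intro g hzero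
      have h1 := natDegree_linear (b := Bco σ haff g) (Aco_ne σ haff g)
      rw [hzero] at h1
      simp at h1
    have hFdeg : F.natDegree = Fintype.card G := by
      rw [hF, natDegree_prod _ _ fun g _ => hfacne g]
      simp [natDegree_linear, Aco_ne σ haff]
    exact ⟨Fintype.card G, F, hFinv, by rw [hFdeg]; exact Fintype.card_pos, hFdeg⟩
  -- Main claim: any invariant polynomial of minimal degree generates.
  have key : ∀ f : Polynomial L, IsInvariantPoly G L σ f →
      f.natDegree = sInf {d : ℕ | ∃ p : Polynomial L,
        IsInvariantPoly G L σ p ∧ 0 < p.natDegree ∧ p.natDegree = d} →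
      fixedSubfield G (RatFunc L) σ = genSubfield G L σ f := by
    intro f hfinv hfdeg
    obtain ⟨p0, hp0inv, hp0pos, hp0deg⟩ := Nat.sInf_mem hSne
    have hfpos : 0 < f.natDegree := by rw [hfdeg, ← hp0deg]; exact hp0pos
    have hfne : f ≠ 0 := fun h => by simp [h] at hfpos
    have hconst : ∀ a : L, (∀ g : G, σ g (RatFunc.C a) = RatFunc.C a) →
        (RatFunc.C a : RatFunc L) ∈ genSubfield G L σ f := fun a ha =>
      Subfield.subset_closure (Or.inl ⟨a, ha, rfl⟩)
    have hconstpoly : ∀ r : Polynomial L, IsInvariantPoly G L σ r → r.natDegree = 0 →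
        ι r ∈ genSubfield G L σ f := by
      intro r hrinv hr0
      have hrC : r = C (r.coeff 0) := eq_C_of_natDegree_eq_zero hr0
      rw [hrC, RatFunc.algebraMap_C]
      apply hconst
      intro g
      have h1 := hrinv g
      rwa [hrC, RatFunc.algebraMap_C] at h1
    have invPg : ∀ w : Polynomial L, (∀ g : G, Pg σ hL haff g w = w) →
        IsInvariantPoly G L σ w := fun w hw g => by
      rw [iota_Pg σ hL haff, hw]
    have Pginv : ∀ w : Polynomial L, IsInvariantPoly G L σ w →
        ∀ g : G, Pg σ hL haff g w = w := fun w hw g =>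
      iota_inj (by rw [← iota_Pg σ hL haff, hw])
    -- invariant polynomials lie in the generated subfield
    have lemC : ∀ n (s : Polynomial L), s.natDegree ≤ n → IsInvariantPoly G L σ s →
        ι s ∈ genSubfield G L σ f := by
      intro n
      induction n with
      | zero => exact fun s h0 hsinv => hconstpoly s hsinv (Nat.le_zero.mp h0)
      | succ n IH =>
        intro s hsn hsinv
        by_cases hsle : s.natDegree ≤ n
        · exact IH s hsle hsinv
        push_neg at hsle
        obtain ⟨w, r, hdiv, hr⟩ := exists_div f s hfne
        have hwr : ∀ g : G, Pg σ hL haff g w = w ∧ Pg σ hL haff g r = r := by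
          intro g
          have e1 := congrArg (Pg σ hL haff g) hdiv
          rw [map_add, map_mul, Pginv s hsinv g, Pginv f hfinv g] at e1
          have hrg : (Pg σ hL haff g r).degree < f.degree := by
            by_cases hr0 : r = 0
            · rw [hr0, map_zero, degree_zero]
              exact bot_lt_iff_ne_bot.mpr fun hh => hfne (degree_eq_bot.mp hh)
            · rw [degree_eq_natDegree (Pg_ne_zero σ hL haff g hr0), Pg_natDegree,
                ← degree_eq_natDegree hr0]
              exact hr
          obtain ⟨hs', hr'⟩ := div_unique hfne (hdiv.symm.trans e1) hr hrg
          exact ⟨hs'.symm, hr'.symm⟩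
        have hrinv : IsInvariantPoly G L σ r := invPg r fun g => (hwr g).2
        have hwinv : IsInvariantPoly G L σ w := invPg w fun g => (hwr g).1
        have hrdeg0 : r.natDegree = 0 := by
          by_contra hne
          have hrne : r ≠ 0 := fun h => hne (by simp [h])
          have h1 : sInf {d : ℕ | ∃ p : Polynomial L,
              IsInvariantPoly G L σ p ∧ 0 < p.natDegree ∧ p.natDegree = d} ≤ r.natDegree :=
            Nat.sInf_le ⟨r, hrinv, Nat.pos_of_ne_zero hne, rfl⟩
          have h2 : f.natDegree ≤ r.natDegree := by rw [hfdeg]; exact h1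
          have h3 : r.natDegree < f.natDegree := natDegree_lt_natDegree hrne hr
          omega
        have hwmem : ι w ∈ genSubfield G L σ f := by
          by_cases hw0 : w = 0
          · rw [hw0, map_zero]; exact Subfield.zero_mem _
          · apply IH w ?_ hwinv
            have hfw : (f * w).degree = s.degree := by
              rw [hdiv]
              refine (degree_add_eq_left_of_degree_lt ?_).symm
              calc r.degree < f.degree := hr
                _ ≤ (f * w).degree := by
                    rw [degree_mul]
                    have h0 : (0 : WithBot ℕ) ≤ w.degree := by
                      rw [degree_eq_natDegree hw0]; exact_mod_cast Nat.zero_le _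
                    exact le_add_of_nonneg_right h0
            have hnd : f.natDegree + w.natDegree = s.natDegree := by
              rw [← natDegree_mul hfne hw0]
              exact natDegree_eq_of_degree_eq hfw
            omega
        rw [hdiv, map_add, map_mul]
        exact Subfield.add_mem _
          (Subfield.mul_mem _ (Subfield.subset_closure (Or.inr rfl)) hwmem)
          (hconstpoly r hrinv hrdeg0)
    apply le_antisymm
    · -- fixed ⊆ generated
      intro u hu
      by_cases hu0 : u = 0
      · rw [hu0]; exact Subfield.zero_mem _
      set p := u.num with hp
      set q := u.denom with hq
      have hqne : q ≠ 0 := u.denom_ne_zero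
      have hpne : p ≠ 0 := RatFunc.num_ne_zero hu0
      have hcop : IsCoprime p q := u.isCoprime_num_denom
      have hudef : ι p / ι q = u := u.num_div_denom
      have hιq : ι q ≠ 0 := fun h => hqne (iota_inj (by rw [h, map_zero]))
      have hιp : ι p ≠ 0 := fun h => hpne (iota_inj (by rw [h, map_zero]))
      have hcross : ∀ g : G, Pg σ hL haff g p * q = p * Pg σ hL haff g q := by
        intro g
        have h1 : σ g u = u := hu g
        have hιPq : ι (Pg σ hL haff g q) ≠ 0 := fun h =>
          Pg_ne_zero σ hL haff g hqne (iota_inj (by rw [h, map_zero]))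
        have h2 : ι (Pg σ hL haff g p) / ι (Pg σ hL haff g q) = ι p / ι q := by
          rw [← iota_Pg σ hL haff, ← iota_Pg σ hL haff, ← map_div₀, hudef, h1]
        have h3 : ι (Pg σ hL haff g p) * ι q = ι p * ι (Pg σ hL haff g q) :=
          (div_eq_div_iff hιPq hιq).mp h2
        rw [← map_mul, ← map_mul] at h3
        exact iota_inj h3
      have hcg : ∀ g : G, ∃ cg : L, cg ≠ 0 ∧ Pg σ hL haff g q = C cg * q ∧
          Pg σ hL haff g p = C cg * p := by
        intro g
        have hdvd : q ∣ Pg σ hL haff g q := by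
          apply hcop.symm.dvd_of_dvd_mul_left
          exact ⟨Pg σ hL haff g p, by rw [← hcross g]; ring⟩
        obtain ⟨d, hd⟩ := hdvd
        have hdne : d ≠ 0 := by
          intro h
          apply Pg_ne_zero σ hL haff g hqne
          rw [hd, h, mul_zero]
        have hddeg : d.natDegree = 0 := by
          have h1 := Pg_natDegree σ hL haff g q
          rw [hd, natDegree_mul hqne hdne] at h1
          omega
        have hdC : d = C (d.coeff 0) := eq_C_of_natDegree_eq_zero hddeg
        refine ⟨d.coeff 0, fun h => hdne (by rw [hdC, h, map_zero]), ?_, ?_⟩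
        · rw [hd, ← hdC]; ring
        · have h1 := hcross g
          rw [hd, hdC] at h1
          have h2 : Pg σ hL haff g p * q = (C (d.coeff 0) * p) * q := by rw [h1]; ring
          exact mul_right_cancel₀ hqne h2
      choose c hc0 hcq hcp using hcg
      set D : Set ℕ := {d : ℕ | ∃ h : Polynomial L, h ≠ 0 ∧
        (∀ g : G, Pg σ hL haff g h = C (c g) * h) ∧ h.natDegree = d} with hD
      have hDne : D.Nonempty := ⟨q.natDegree, q, hqne, hcq, rfl⟩
      obtain ⟨h0, h0ne, h0M, h0deg⟩ := Nat.sInf_mem hDne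
      have h0min : ∀ h : Polynomial L, h ≠ 0 → (∀ g : G, Pg σ hL haff g h = C (c g) * h) →
          h0.natDegree ≤ h.natDegree := fun h hne hM => by
        rw [h0deg]; exact Nat.sInf_le ⟨h, hne, hM, rfl⟩
      obtain ⟨s, hsPg, hps⟩ := semiInv_factor σ hL haff c hc0 h0 h0ne h0M h0min p hcp
      obtain ⟨t, htPg, hqt⟩ := semiInv_factor σ hL haff c hc0 h0 h0ne h0M h0min q hcq
      have hιh0 : ι h0 ≠ 0 := fun h => h0ne (iota_inj (by rw [h, map_zero]))
      have hueq : u = ι s / ι t := by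
        rw [← hudef, hps, hqt, map_mul, map_mul, mul_div_mul_left _ _ hιh0]
      rw [hueq]
      exact Subfield.div_mem _ (lemC s.natDegree s le_rfl (invPg s hsPg))
        (lemC t.natDegree t le_rfl (invPg t htPg))
    · -- generated ⊆ fixed
      apply Subfield.closure_le.mpr
      rintro x (⟨a, ha, rfl⟩ | rfl)
      · exact fun g => ha g
      · exact fun g => hfinv g
  obtain ⟨p0, h1, h2, h3⟩ := Nat.sInf_mem hSne
  exact ⟨⟨p0, h1, key p0 h1 h3⟩, key⟩

end
end

section
/- Let k be a field with char k ≠ 2, let c ∈ k be nonzero, and let τ_3 be the k-automorphism of order 2 of the rational function field k(x,y,z) given by τ_3 : x ↦ y, y ↦ x, z ↦ c/(xyz). Then the fixed field k(x,y,z)^⟨τ_3⟩ equals k(t_1,t_2,t_3), where t_1 = xy/(x+y), t_2 = (xyz + c/z)/(x+y), and t_3 = (xyz − c/z)/(x−y). -/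
noncomputable section

lemma ratfn_map_ne_zero {k : Type} [Field k] {p : MvPolynomial (Fin 3) k} (hp : p ≠ 0) :
    algebraMap (MvPolynomial (Fin 3) k) (RatFn k (Fin 3)) p ≠ 0 := fun h =>
  hp (IsFractionRing.injective (MvPolynomial (Fin 3) k) (RatFn k (Fin 3)) (by rw [h, map_zero]))

set_option maxHeartbeats 2000000 in
set_option synthInstance.maxHeartbeats 200000 in
/-- **Hoshi–Kitayama–Yamasaki.** Let `k` be a field of characteristic `≠ 2`, `c ∈ kˣ`, and
let `τ₃` be the `k`-automorphism of `k(x,y,z)` with `τ₃ : x ↦ y, y ↦ x, z ↦ c/(xyz)`.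
Then `k(x,y,z)^⟨τ₃⟩ = k(t₁,t₂,t₃)` where `t₁ = xy/(x+y)`, `t₂ = (xyz + c/z)/(x+y)` and
`t₃ = (xyz − c/z)/(x−y)`. -/
theorem statement16 (k : Type) [Field k] (hk2 : ringChar k ≠ 2) (c : k) (hc : c ≠ 0)
    (τ : RatFnAut k (Fin 3))
    (hx : τ (Xv k (0 : Fin 3)) = Xv k (1 : Fin 3))
    (hy : τ (Xv k (1 : Fin 3)) = Xv k (0 : Fin 3))
    (hz : τ (Xv k (2 : Fin 3)) =
      algebraMap k (RatFn k (Fin 3)) c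
        / (Xv k (0 : Fin 3) * Xv k (1 : Fin 3) * Xv k (2 : Fin 3))) :
    IntermediateField.fixedField (Subgroup.zpowers τ) =
      IntermediateField.adjoin k
        ({ Xv k (0 : Fin 3) * Xv k (1 : Fin 3) / (Xv k (0 : Fin 3) + Xv k (1 : Fin 3)),
           (Xv k (0 : Fin 3) * Xv k (1 : Fin 3) * Xv k (2 : Fin 3)
              + algebraMap k (RatFn k (Fin 3)) c / Xv k (2 : Fin 3))
             / (Xv k (0 : Fin 3) + Xv k (1 : Fin 3)),
           (Xv k (0 : Fin 3) * Xv k (1 : Fin 3) * Xv k (2 : Fin 3)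
              - algebraMap k (RatFn k (Fin 3)) c / Xv k (2 : Fin 3))
             / (Xv k (0 : Fin 3) - Xv k (1 : Fin 3)) } : Set (RatFn k (Fin 3))) := by
  set x := Xv k (0 : Fin 3) with hxd
  set y := Xv k (1 : Fin 3) with hyd
  set z := Xv k (2 : Fin 3) with hzd
  set c' := algebraMap k (RatFn k (Fin 3)) c with hcd
  -- nonzeroness facts
  have hx0 : x ≠ 0 := ratfn_map_ne_zero (MvPolynomial.X_ne_zero 0)
  have hy0 : y ≠ 0 := ratfn_map_ne_zero (MvPolynomial.X_ne_zero 1)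
  have hz0 : z ≠ 0 := ratfn_map_ne_zero (MvPolynomial.X_ne_zero 2)
  have hc0 : c' ≠ 0 := by
    rw [hcd]
    exact fun h => hc ((algebraMap k (RatFn k (Fin 3))).injective (h.trans (map_zero _).symm))
  have hs0 : x + y ≠ 0 := by
    rw [hxd, hyd, Xv, Xv, ← map_add (algebraMap (MvPolynomial (Fin 3) k) (RatFn k (Fin 3)))]
    refine ratfn_map_ne_zero fun h => ?_
    have := congrArg (MvPolynomial.eval ![1, 0, 0]) h
    simp at this
  have hd0 : x - y ≠ 0 := by
    rw [hxd, hyd, Xv, Xv, ← map_sub (algebraMap (MvPolynomial (Fin 3) k) (RatFn k (Fin 3)))]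
    refine ratfn_map_ne_zero fun h => ?_
    have := congrArg (MvPolynomial.eval ![1, 0, 0]) h
    simp at this
  have hd0' : y - x ≠ 0 := fun h => hd0 (by rw [← neg_sub y x, h, neg_zero])
  have hs0' : y + x ≠ 0 := by rw [add_comm]; exact hs0
  have h2 : (2 : RatFn k (Fin 3)) ≠ 0 := by
    have h2k : (2 : k) ≠ 0 := Ring.two_ne_zero hk2
    intro h
    exact h2k ((algebraMap k (RatFn k (Fin 3))).injective
      (by rw [map_ofNat]; exact h.trans (map_zero _).symm))
  have h4 : (4 : RatFn k (Fin 3)) ≠ 0 := by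
    have h44 : (4 : RatFn k (Fin 3)) = 2 * 2 := by norm_num
    rw [h44]; exact mul_ne_zero h2 h2
  have hA0 : c' - y ^ 2 * z ^ 2 ≠ 0 := by
    have heq : c' - y ^ 2 * z ^ 2 = algebraMap (MvPolynomial (Fin 3) k) (RatFn k (Fin 3))
        (MvPolynomial.C c - MvPolynomial.X 1 ^ 2 * MvPolynomial.X 2 ^ 2) := by
      rw [hcd, hyd, hzd, Xv, Xv, map_sub, map_mul, map_pow, map_pow,
        IsScalarTower.algebraMap_apply k (MvPolynomial (Fin 3) k) (RatFn k (Fin 3)),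
        MvPolynomial.algebraMap_eq]
    rw [heq]
    refine ratfn_map_ne_zero fun h => ?_
    have := congrArg (MvPolynomial.eval ![0, 0, 0]) h
    simp at this
    exact hc this
  have hB0 : x ^ 2 * z ^ 2 - c' ≠ 0 := by
    have heq : x ^ 2 * z ^ 2 - c' = algebraMap (MvPolynomial (Fin 3) k) (RatFn k (Fin 3))
        (MvPolynomial.X 0 ^ 2 * MvPolynomial.X 2 ^ 2 - MvPolynomial.C c) := by
      rw [hcd, hxd, hzd, Xv, Xv, map_sub, map_mul, map_pow, map_pow,
        IsScalarTower.algebraMap_apply k (MvPolynomial (Fin 3) k) (RatFn k (Fin 3)),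
        MvPolynomial.algebraMap_eq]
    rw [heq]
    refine ratfn_map_ne_zero fun h => ?_
    have := congrArg (MvPolynomial.eval ![0, 0, 0]) h
    simp at this
    exact hc this
  -- name the generators
  set t1 := x * y / (x + y) with ht1d
  set t2 := (x * y * z + c' / z) / (x + y) with ht2d
  set t3 := (x * y * z - c' / z) / (x - y) with ht3d
  set E := IntermediateField.adjoin k ({t1, t2, t3} : Set (RatFn k (Fin 3))) with hEd
  -- τ fixes the generators
  have hτc : τ c' = c' := by rw [hcd]; exact τ.commutes c
  have fix1 : τ t1 = t1 := by
    rw [ht1d]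
    simp only [map_div₀, map_add, map_mul, hx, hy]
    ring_nf
  have fix2 : τ t2 = t2 := by
    rw [ht2d]
    simp only [map_div₀, map_add, map_mul, hx, hy, hz, hτc]
    have hcc : c' / (c' / (x * y * z)) = x * y * z := by
      rw [div_div_eq_mul_div]
      exact mul_div_cancel_left₀ _ hc0
    rw [hcc]
    field_simp
    ring
  have fix3 : τ t3 = t3 := by
    rw [ht3d]
    simp only [map_div₀, map_sub, map_mul, hx, hy, hz, hτc]
    have hcc : c' / (c' / (x * y * z)) = x * y * z := by
      rw [div_div_eq_mul_div]
      exact mul_div_cancel_left₀ _ hc0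
    rw [hcc]
    field_simp
    ring
  -- elements fixed by τ lie in the fixed field
  have hmemF : ∀ t : RatFn k (Fin 3), τ t = t →
      t ∈ IntermediateField.fixedField (Subgroup.zpowers τ) := by
    intro t ht g
    have hg : (g : RatFnAut k (Fin 3)) ∈ MulAction.stabilizer (RatFnAut k (Fin 3)) t :=
      Subgroup.zpowers_le.mpr (show τ ∈ _ from ht) g.2
    exact hg
  have hEF : E ≤ IntermediateField.fixedField (Subgroup.zpowers τ) := by
    rw [hEd]
    refine IntermediateField.adjoin_le_iff.mpr ?_
    rintro t (rfl | rfl | rfl)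
    · exact hmemF _ fix1
    · exact hmemF _ fix2
    · exact hmemF _ fix3
  have hfixE : ∀ a ∈ E, τ a = a := fun a ha => (hEF ha) ⟨τ, Subgroup.mem_zpowers τ⟩
  -- memberships
  have hm1 : t1 ∈ E := IntermediateField.subset_adjoin k _ (Set.mem_insert _ _)
  have hm2 : t2 ∈ E :=
    IntermediateField.subset_adjoin k _ (Set.mem_insert_of_mem _ (Set.mem_insert _ _))
  have hm3 : t3 ∈ E :=
    IntermediateField.subset_adjoin k _ (Set.mem_insert_of_mem _ (Set.mem_insert_of_mem _ rfl))
  have hcE : c' ∈ E := hcd ▸ E.algebraMap_mem c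
  have h4E : (4 : RatFn k (Fin 3)) ∈ E := by
    have : (4 : RatFn k (Fin 3)) = algebraMap k _ 4 := by rw [map_ofNat]
    rw [this]; exact E.algebraMap_mem 4
  have h2E : (2 : RatFn k (Fin 3)) ∈ E := by
    have : (2 : RatFn k (Fin 3)) = algebraMap k _ 2 := by rw [map_ofNat]
    rw [this]; exact E.algebraMap_mem 2
  have hT0 : t2 ^ 2 - t3 ^ 2 ≠ 0 := by
    have hTid : t2 ^ 2 - t3 ^ 2 =
        4 * x * y * ((c' - y ^ 2 * z ^ 2) * (x ^ 2 * z ^ 2 - c')) /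
          (z ^ 2 * (x + y) ^ 2 * (x - y) ^ 2) := by
      rw [ht2d, ht3d]
      field_simp
      ring
    rw [hTid]
    exact div_ne_zero
      (mul_ne_zero (mul_ne_zero (mul_ne_zero h4 hx0) hy0) (mul_ne_zero hA0 hB0))
      (mul_ne_zero (mul_ne_zero (pow_ne_zero 2 hz0) (pow_ne_zero 2 hs0)) (pow_ne_zero 2 hd0))
  have hsE : x + y ∈ E := by
    have hsid' : (t2 ^ 2 - t3 ^ 2) * (x + y) = 4 * t1 * (c' - t3 ^ 2) := by
      rw [ht1d, ht2d, ht3d]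
      field_simp
      ring
    have hsid : x + y = 4 * t1 * (c' - t3 ^ 2) / (t2 ^ 2 - t3 ^ 2) := by
      rw [eq_div_iff hT0, mul_comm]
      exact hsid'
    rw [hsid]
    exact div_mem (mul_mem (mul_mem h4E hm1) (sub_mem hcE (pow_mem hm3 2)))
      (sub_mem (pow_mem hm2 2) (pow_mem hm3 2))
  have hPE : x * y ∈ E := by
    have : x * y = t1 * (x + y) := by rw [ht1d]; field_simp
    rw [this]; exact mul_mem hm1 hsE
  have hzid : z = (t2 * (x + y) + t3 * (x - y)) / (2 * (x * y)) := by
    rw [ht2d, ht3d]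
    field_simp
    ring
  -- the span predicate
  set P : RatFn k (Fin 3) → Prop := fun a => ∃ p q, p ∈ E ∧ q ∈ E ∧ a = p + q * x with hPd
  have hPadd : ∀ a b, P a → P b → P (a + b) := by
    rintro a b ⟨p, q, hp, hq, rfl⟩ ⟨r, u, hr, hu, rfl⟩
    exact ⟨p + r, q + u, add_mem hp hr, add_mem hq hu, by ring⟩
  have hPmul : ∀ a b, P a → P b → P (a * b) := by
    rintro a b ⟨p, q, hp, hq, rfl⟩ ⟨r, u, hr, hu, rfl⟩
    refine ⟨p * r - q * u * (x * y), p * u + q * r + q * u * (x + y),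
      sub_mem (mul_mem hp hr) (mul_mem (mul_mem hq hu) hPE),
      add_mem (add_mem (mul_mem hp hu) (mul_mem hq hr)) (mul_mem (mul_mem hq hu) hsE), ?_⟩
    ring
  have hPofE : ∀ a, a ∈ E → P a := fun a ha => ⟨a, 0, ha, zero_mem E, by ring⟩
  have hPx : P x := ⟨0, 1, zero_mem E, one_mem E, by ring⟩
  have hPy : P y := ⟨x + y, -1, hsE, neg_mem (one_mem E), by ring⟩
  have hPinv : ∀ a, P a → P a⁻¹ := by
    rintro a ⟨p, q, hp, hq, ha⟩
    by_cases ha0 : a = 0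
    · rw [ha0, inv_zero]; exact hPofE 0 (zero_mem E)
    · have hτa : τ a = p + q * y := by
        rw [ha, map_add, map_mul, hx, hfixE p hp, hfixE q hq]
      have hNval : a * τ a = p ^ 2 + p * q * (x + y) + q ^ 2 * (x * y) := by
        rw [hτa, ha]; ring
      have hτa0 : τ a ≠ 0 := fun h => ha0 (by
        have := congrArg τ.symm h
        simpa using this)
      have hN0 : p ^ 2 + p * q * (x + y) + q ^ 2 * (x * y) ≠ 0 := by
        rw [← hNval]; exact mul_ne_zero ha0 hτa0
      have hNE : p ^ 2 + p * q * (x + y) + q ^ 2 * (x * y) ∈ E :=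
        add_mem (add_mem (pow_mem hp 2) (mul_mem (mul_mem hp hq) hsE))
          (mul_mem (pow_mem hq 2) hPE)
      refine ⟨(p + q * (x + y)) / (p ^ 2 + p * q * (x + y) + q ^ 2 * (x * y)),
        -q / (p ^ 2 + p * q * (x + y) + q ^ 2 * (x * y)),
        div_mem (add_mem hp (mul_mem hq hsE)) hNE, div_mem (neg_mem hq) hNE, ?_⟩
      have hinv : a⁻¹ = (p + q * y) / (p ^ 2 + p * q * (x + y) + q ^ 2 * (x * y)) := by
        rw [eq_div_iff hN0, ← hNval, ← mul_assoc, inv_mul_cancel₀ ha0, one_mul, hτa]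
      rw [hinv]
      field_simp
      ring
  have hPdiv : ∀ a b, P a → P b → P (a / b) := by
    intro a b haa hbb
    rw [div_eq_mul_inv]
    exact hPmul _ _ haa (hPinv _ hbb)
  have hPz : P z := by
    rw [hzid]
    refine hPdiv _ _ ?_ (hPofE _ (mul_mem h2E hPE))
    refine hPadd _ _ (hPofE _ (mul_mem hm2 hsE)) (hPmul _ _ (hPofE _ hm3) ?_)
    exact ⟨-(x + y), 2, neg_mem hsE, h2E, by ring⟩
  have hPpoly : ∀ p : MvPolynomial (Fin 3) k,
      P (algebraMap (MvPolynomial (Fin 3) k) (RatFn k (Fin 3)) p) := by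
    intro p
    induction p using MvPolynomial.induction_on with
    | C a =>
      have : algebraMap (MvPolynomial (Fin 3) k) (RatFn k (Fin 3)) (MvPolynomial.C a)
          = algebraMap k (RatFn k (Fin 3)) a := by
        rw [← MvPolynomial.algebraMap_eq, ← IsScalarTower.algebraMap_apply]
      rw [this]
      exact hPofE _ (E.algebraMap_mem a)
    | add p q hp hq => rw [map_add]; exact hPadd _ _ hp hq
    | mul_X p i hp =>
      rw [map_mul]
      refine hPmul _ _ hp ?_
      have hX0 : algebraMap (MvPolynomial (Fin 3) k) (RatFn k (Fin 3))
          (MvPolynomial.X (0 : Fin 3)) = x := hxd.symm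
      have hX1 : algebraMap (MvPolynomial (Fin 3) k) (RatFn k (Fin 3))
          (MvPolynomial.X (1 : Fin 3)) = y := hyd.symm
      have hX2 : algebraMap (MvPolynomial (Fin 3) k) (RatFn k (Fin 3))
          (MvPolynomial.X (2 : Fin 3)) = z := hzd.symm
      fin_cases i
      · show P (algebraMap (MvPolynomial (Fin 3) k) (RatFn k (Fin 3))
          (MvPolynomial.X (0 : Fin 3)))
        rw [hX0]; exact hPx
      · show P (algebraMap (MvPolynomial (Fin 3) k) (RatFn k (Fin 3))
          (MvPolynomial.X (1 : Fin 3)))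
        rw [hX1]; exact hPy
      · show P (algebraMap (MvPolynomial (Fin 3) k) (RatFn k (Fin 3))
          (MvPolynomial.X (2 : Fin 3)))
        rw [hX2]; exact hPz
  have hPall : ∀ a : RatFn k (Fin 3), P a := by
    intro a
    obtain ⟨pn, pd, _, h⟩ := IsFractionRing.div_surjective (A := MvPolynomial (Fin 3) k) a
    rw [← h]
    exact hPdiv _ _ (hPpoly _) (hPpoly _)
  -- conclude
  refine le_antisymm ?_ hEF
  intro a ha
  have hτa : τ a = a := ha ⟨τ, Subgroup.mem_zpowers τ⟩
  obtain ⟨p, q, hp, hq, hae⟩ := hPall a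
  have hτa2 : τ a = p + q * y := by
    rw [hae, map_add, map_mul, hx, hfixE p hp, hfixE q hq]
  have hq0 : q = 0 := by
    have h1 : p + q * y = p + q * x := by rw [← hτa2, hτa, hae]
    have h2' : q * (x - y) = 0 := by
      have := add_left_cancel h1
      rw [mul_sub, this, sub_self]
    rcases mul_eq_zero.mp h2' with h | h
    · exact h
    · exact absurd h hd0
  rw [hae, hq0, zero_mul, add_zero]
  exact hp
end
end
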